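/- (Proposition 2: deterministic proximal-gradient variational inference with varying step sizes.) Let f : E → ℝ be differentiable with L-Lipschitz gradient (L > 0), let h : E → ℝ be convex on S, let α > 0, let t ≥ 1, and let λ : ℕ → E and β : ℕ → ℝ satisfy: λ₀ ∈ S; for every k < t, 0 < β_k ≤ 2α/L, λ_{k+1} ∈ S minimizes λ ↦ ⟨λ, ∇f(λ_k)⟩ + h(λ) + (1/β_k)·D(λ, λ_k) over S, h is differentiable at λ_{k+1}, the map λ ↦ D(λ, λ_k) is differentiable at λ_{k+1}, and ⟨λ_{k+1} − λ_k, ∇₁D(λ_{k+1}, λ_k)⟩ ≥ α·‖λ_{k+1} − λ_k‖²; moreover β_k < 2α/L for at least one k < t. Suppose 𝓛* ∈ ℝ satisfies −(f(λ) + h(λ)) ≤ 𝓛* for all λ ∈ S, and set C₀ := 𝓛* + f(λ₀) + h(λ₀) and G_k := (λ_k − λ_{k+1})/β_k. Then min over k ∈ {0, 1, …, t−1} of ‖G_k‖² is at most C₀ / ( Σ_{k=0}^{t−1} (α·β_k − (L/2)·β_k²) ). -/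

import Mathlib

open scoped RealInnerProductSpace

open InnerProductSpace

lemma comp_line_hasDerivAt {E : Type*} [NormedAddCommGroup E] [InnerProductSpace ℝ E] [CompleteSpace E]
    (f : E → ℝ) (hf : Differentiable ℝ f) (x v : E) (s : ℝ) :
    HasDerivAt (fun s : ℝ => f (x + s • v)) ⟪gradient f (x + s • v), v⟫ s := by
  have h1 : HasDerivAt (fun s : ℝ => x + s • v) v s := by
    simpa using ((hasDerivAt_id s).smul_const v).const_add x
  have h2 := (hf (x + s • v)).hasGradientAt.hasFDerivAt.comp_hasDerivAt s h1
  simpa [InnerProductSpace.toDual_apply_apply, Function.comp_def] using h2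

lemma descent_lemma {E : Type*} [NormedAddCommGroup E] [InnerProductSpace ℝ E] [CompleteSpace E]
    (f : E → ℝ) (L : ℝ) (hL : 0 ≤ L) (hf : Differentiable ℝ f)
    (hlip : ∀ x y : E, ‖gradient f x - gradient f y‖ ≤ L * ‖x - y‖)
    (x y : E) :
    f y ≤ f x + ⟪gradient f x, y - x⟫ + L / 2 * ‖y - x‖ ^ 2 := by
  set v := y - x with hv
  set C : ℝ := ⟪gradient f x, v⟫ with hC
  set K : ℝ := L / 2 * ‖v‖ ^ 2 with hK
  set g : ℝ → ℝ := fun s => f (x + s • v) - s * C - K * s ^ 2 with hg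
  have hder : ∀ s : ℝ, HasDerivAt g (⟪gradient f (x + s • v), v⟫ - C - K * (2 * s)) s := by
    intro s
    have h1 := comp_line_hasDerivAt f hf x v s
    have h2 : HasDerivAt (fun s : ℝ => s * C) C s := by
      simpa using (hasDerivAt_id s).mul_const C
    have h3 : HasDerivAt (fun s : ℝ => K * s ^ 2) (K * (2 * s)) s := by
      simpa using ((hasDerivAt_pow 2 s).const_mul K)
    exact (h1.sub h2).sub h3
  have hanti : AntitoneOn g (Set.Icc 0 1) := by
    apply antitoneOn_of_deriv_nonpos (convex_Icc 0 1)
    · exact (Differentiable.continuous (fun s => (hder s).differentiableAt)).continuousOn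
    · exact fun s _ => (hder s).differentiableAt.differentiableWithinAt
    · intro s hs
      rw [interior_Icc] at hs
      rw [(hder s).deriv]
      have hip : ⟪gradient f (x + s • v) - gradient f x, v⟫ ≤ L * s * ‖v‖ ^ 2 := by
        calc ⟪gradient f (x + s • v) - gradient f x, v⟫
            ≤ ‖gradient f (x + s • v) - gradient f x‖ * ‖v‖ := real_inner_le_norm _ _
          _ ≤ (L * ‖(x + s • v) - x‖) * ‖v‖ :=
              mul_le_mul_of_nonneg_right (hlip _ _) (norm_nonneg _)
          _ = L * s * ‖v‖ ^ 2 := by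
              simp [norm_smul, abs_of_nonneg hs.1.le]; ring
      have : ⟪gradient f (x + s • v), v⟫ - C = ⟪gradient f (x + s • v) - gradient f x, v⟫ := by
        rw [inner_sub_left]
      rw [hK]
      nlinarith [hip, this]
  have h01 := hanti (Set.left_mem_Icc.2 zero_le_one) (Set.right_mem_Icc.2 zero_le_one) zero_le_one
  have hg0 : g 0 = f x := by simp [hg]
  have hg1 : g 1 = f y - C - K := by simp [hg, hv]
  rw [hg0, hg1] at h01
  linarith

lemma convexon_grad_le {E : Type*} [NormedAddCommGroup E] [InnerProductSpace ℝ E] [CompleteSpace E]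
    (S : Set E) (h : E → ℝ) (hconv : ConvexOn ℝ S h)
    (x y : E) (hx : x ∈ S) (hy : y ∈ S) (hd : DifferentiableAt ℝ h x) :
    ⟪gradient h x, y - x⟫ ≤ h y - h x := by
  set v := y - x with hv
  set g : ℝ → ℝ := fun s => h (x + s • v) with hg
  have hder : HasDerivAt g ⟪gradient h x, v⟫ 0 := by
    have h1 : HasDerivAt (fun s : ℝ => x + s • v) v 0 := by
      simpa using ((hasDerivAt_id (0:ℝ)).smul_const v).const_add x
    have h2 : HasFDerivAt h ((toDual ℝ E) (gradient h x)) (x + (0:ℝ) • v) := by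
      simpa using hd.hasGradientAt.hasFDerivAt
    simpa [InnerProductSpace.toDual_apply_apply, Function.comp_def] using h2.comp_hasDerivAt 0 h1
  have hslope := hasDerivAt_iff_tendsto_slope.mp hder
  have hmono : Filter.Tendsto (slope g 0) (nhdsWithin 0 (Set.Ioi 0)) (nhds ⟪gradient h x, v⟫) :=
    hslope.mono_left (nhdsWithin_mono 0 (fun s hs => ne_of_gt hs))
  refine le_of_tendsto hmono ?_
  filter_upwards [Ioc_mem_nhdsGT_of_mem (Set.mem_Ico.2 ⟨le_refl 0, zero_lt_one⟩)] with s hs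
  obtain ⟨hs0, hs1⟩ := hs
  have hcomb : h (x + s • v) ≤ (1 - s) * h x + s * h y := by
    have := hconv.2 hx hy (show (0:ℝ) ≤ 1 - s by linarith) hs0.le (by ring)
    have heq : (1 - s) • x + s • y = x + s • v := by
      rw [hv]; module
    rw [heq] at this
    simpa using this
  have hsl : slope g 0 s = (h (x + s • v) - h x) / s := by
    simp [slope, hg]; ring
  rw [hsl, div_le_iff₀ hs0]
  nlinarith [hcomb]

/-- Proposition 2: deterministic proximal-gradient variational inference with
varying step sizes `0 < β_k ≤ 2α/L` (strict for at least one `k`):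
`min_{k < t} ‖G_k‖² ≤ C₀ / Σ_{k<t} (αβ_k − (L/2)β_k²)`, where
`G_k := (λ_k − λ_{k+1})/β_k` and `C₀ := 𝓛* + f(λ₀) + h(λ₀)`. -/
theorem stmt_2 {E : Type*} [NormedAddCommGroup E] [InnerProductSpace ℝ E] [CompleteSpace E]
    (S : Set E) (hS : Convex ℝ S)
    (h : E → ℝ) (D : E → E → ℝ)
    (f : E → ℝ) (L : ℝ) (hL : 0 < L)
    (hf : Differentiable ℝ f)
    (hlip : ∀ x y : E, ‖gradient f x - gradient f y‖ ≤ L * ‖x - y‖)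
    (hconv : ConvexOn ℝ S h)
    (α : ℝ) (hα : 0 < α) (t : ℕ) (ht : 1 ≤ t)
    (lam : ℕ → E) (β : ℕ → ℝ)
    (hlam0 : lam 0 ∈ S)
    (hβpos : ∀ k < t, 0 < β k)
    (hβle : ∀ k < t, β k ≤ 2 * α / L)
    (hstrict : ∃ k < t, β k < 2 * α / L)
    (hmem : ∀ k < t, lam (k + 1) ∈ S)
    (hmin : ∀ k < t, ∀ y ∈ S,
      ⟪lam (k + 1), gradient f (lam k)⟫ + h (lam (k + 1)) +
          (1 / β k) * D (lam (k + 1)) (lam k) ≤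
        ⟪y, gradient f (lam k)⟫ + h y + (1 / β k) * D y (lam k))
    (hdiff : ∀ k < t, DifferentiableAt ℝ h (lam (k + 1)))
    (hDdiff : ∀ k < t, DifferentiableAt ℝ (fun x => D x (lam k)) (lam (k + 1)))
    (hA6 : ∀ k < t,
      ⟪lam (k + 1) - lam k, gradient (fun x => D x (lam k)) (lam (k + 1))⟫ ≥
        α * ‖lam (k + 1) - lam k‖ ^ 2)
    (Lstar : ℝ) (hLstar : ∀ x ∈ S, -(f x + h x) ≤ Lstar) :
    (Finset.range t).inf' (Finset.nonempty_range_iff.mpr (by omega))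
        (fun k => ‖(1 / β k) • (lam k - lam (k + 1))‖ ^ 2) ≤
      (Lstar + f (lam 0) + h (lam 0)) /
        (∑ k ∈ Finset.range t, (α * β k - (L / 2) * (β k) ^ 2)) := by
  have hlamS : ∀ k ≤ t, lam k ∈ S := by
    intro k hk
    cases k with
    | zero => exact hlam0
    | succ j => exact hmem j (by omega)
  -- Per-step decrease
  have step : ∀ k < t,
      (α * β k - (L / 2) * (β k) ^ 2) * ‖(1 / β k) • (lam k - lam (k + 1))‖ ^ 2 ≤
        (f (lam k) + h (lam k)) - (f (lam (k + 1)) + h (lam (k + 1))) := by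
    intro k hk
    have hβ := hβpos k hk
    set x := lam k with hx
    set x' := lam (k + 1) with hx'
    set gF := gradient f x with hgF
    set gH := gradient h x' with hgH
    set gD := gradient (fun z => D z x) x' with hgDdef
    -- derivative of the objective
    have h1 : HasFDerivAt (fun y : E => ⟪y, gF⟫) (innerSL ℝ gF) x' := by
      have h0 := (innerSL ℝ gF).hasFDerivAt (x := x')
      exact h0.congr_of_eventuallyEq
        (Filter.Eventually.of_forall fun y => by simp [real_inner_comm])
    have h2 : HasFDerivAt h (InnerProductSpace.toDual ℝ E gH) x' :=
      (hdiff k hk).hasGradientAt.hasFDerivAt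
    have h3 : HasFDerivAt (fun y : E => (1 / β k) * D y x)
        ((1 / β k) • InnerProductSpace.toDual ℝ E gD) x' :=
      ((hDdiff k hk).hasGradientAt.hasFDerivAt).const_mul (1 / β k)
    have hφ : HasFDerivAt (fun y : E => ⟪y, gF⟫ + h y + (1 / β k) * D y x)
        (innerSL ℝ gF + InnerProductSpace.toDual ℝ E gH
          + (1 / β k) • InnerProductSpace.toDual ℝ E gD) x' := (h1.add h2).add h3
    have hminOn : IsMinOn (fun y : E => ⟪y, gF⟫ + h y + (1 / β k) * D y x) S x' :=
      fun y hy => hmin k hk y hy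
    have hcone : x - x' ∈ posTangentConeAt S x' :=
      sub_mem_posTangentConeAt_of_segment_subset
        (hS.segment_subset (hmem k hk) (hlamS k hk.le))
    have hopt := IsLocalMinOn.hasFDerivWithinAt_nonneg
      (hminOn.filter_mono inf_le_right) hφ.hasFDerivWithinAt hcone
    have hopt' : 0 ≤ ⟪gF, x - x'⟫ + ⟪gH, x - x'⟫ + (1 / β k) * ⟪gD, x - x'⟫ := by
      simpa [InnerProductSpace.toDual_apply_apply, real_inner_comm] using hopt
    -- descent lemma
    have hdesc := descent_lemma f L hL.le hf hlip x x'
    -- convexity of h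
    have hcvx := convexon_grad_le S h hconv x' x (hmem k hk) (hlamS k hk.le) (hdiff k hk)
    -- A6
    have hA := hA6 k hk
    have hgd : ⟪gD, x - x'⟫ ≤ -(α * ‖x' - x‖ ^ 2) := by
      have e : ⟪gD, x - x'⟫ = -⟪x' - x, gD⟫ := by
        rw [real_inner_comm, ← neg_sub x' x, inner_neg_left]
      rw [e]
      have : ⟪x' - x, gD⟫ ≥ α * ‖x' - x‖ ^ 2 := hA
      linarith
    have h6 : (1 / β k) * ⟪gD, x - x'⟫ ≤ (1 / β k) * (-(α * ‖x' - x‖ ^ 2)) :=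
      mul_le_mul_of_nonneg_left hgd (by positivity)
    have e1 : ⟪gF, x' - x⟫ = -⟪gF, x - x'⟫ := by
      rw [← neg_sub x x', inner_neg_right]
    have h5 : ⟪gF, x' - x⟫ ≤ (h x - h x') - (1 / β k) * (α * ‖x' - x‖ ^ 2) := by
      rw [e1]; linarith
    have h7 : f x' + h x' ≤ f x + h x - ((1 / β k) * α - L / 2) * ‖x' - x‖ ^ 2 := by
      nlinarith [hdesc, h5]
    have hGnorm : ‖(1 / β k) • (x - x')‖ ^ 2 = (1 / β k) ^ 2 * ‖x' - x‖ ^ 2 := by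
      rw [norm_smul, norm_sub_rev, Real.norm_eq_abs, abs_of_pos (by positivity : (0:ℝ) < 1 / β k)]
      ring
    have hco : (α * β k - (L / 2) * (β k) ^ 2) * (1 / β k) ^ 2 = (1 / β k) * α - L / 2 := by
      field_simp
    calc (α * β k - (L / 2) * (β k) ^ 2) * ‖(1 / β k) • (x - x')‖ ^ 2
        = ((1 / β k) * α - L / 2) * ‖x' - x‖ ^ 2 := by rw [hGnorm, ← mul_assoc, hco]
      _ ≤ (f x + h x) - (f x' + h x') := by linarith
  -- nonnegativity of weights
  have hWnn : ∀ k < t, 0 ≤ α * β k - (L / 2) * (β k) ^ 2 := by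
    intro k hk
    have h2a : β k * L ≤ 2 * α := (le_div_iff₀ hL).1 (hβle k hk)
    nlinarith [mul_nonneg (hβpos k hk).le (sub_nonneg.2 h2a)]
  -- positivity of the sum
  have hWpos : 0 < ∑ k ∈ Finset.range t, (α * β k - (L / 2) * (β k) ^ 2) := by
    obtain ⟨k0, hk0t, hk0⟩ := hstrict
    refine Finset.sum_pos' (fun k hk => hWnn k (Finset.mem_range.mp hk)) ⟨k0, Finset.mem_range.mpr hk0t, ?_⟩
    have h2a : β k0 * L < 2 * α := (lt_div_iff₀ hL).1 hk0
    nlinarith [mul_pos (hβpos k0 hk0t) (sub_pos.2 h2a)]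
  -- sum the per-step inequalities
  have hsum : ∑ k ∈ Finset.range t,
      (α * β k - (L / 2) * (β k) ^ 2) * ‖(1 / β k) • (lam k - lam (k + 1))‖ ^ 2 ≤
      Lstar + f (lam 0) + h (lam 0) := by
    have htele : ∑ k ∈ Finset.range t,
        ((f (lam k) + h (lam k)) - (f (lam (k + 1)) + h (lam (k + 1)))) =
        (f (lam 0) + h (lam 0)) - (f (lam t) + h (lam t)) :=
      Finset.sum_range_sub' (fun k => f (lam k) + h (lam k)) t
    have h8 : -(f (lam t) + h (lam t)) ≤ Lstar := hLstar (lam t) (hlamS t le_rfl)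
    calc ∑ k ∈ Finset.range t,
          (α * β k - (L / 2) * (β k) ^ 2) * ‖(1 / β k) • (lam k - lam (k + 1))‖ ^ 2
        ≤ ∑ k ∈ Finset.range t,
          ((f (lam k) + h (lam k)) - (f (lam (k + 1)) + h (lam (k + 1)))) :=
          Finset.sum_le_sum (fun k hk => step k (Finset.mem_range.mp hk))
      _ = (f (lam 0) + h (lam 0)) - (f (lam t) + h (lam t)) := htele
      _ ≤ Lstar + f (lam 0) + h (lam 0) := by linarith
  -- conclude
  set m := (Finset.range t).inf' (Finset.nonempty_range_iff.mpr (by omega))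
      (fun k => ‖(1 / β k) • (lam k - lam (k + 1))‖ ^ 2) with hm
  rw [le_div_iff₀ hWpos]
  calc m * ∑ k ∈ Finset.range t, (α * β k - (L / 2) * (β k) ^ 2)
      = ∑ k ∈ Finset.range t, m * (α * β k - (L / 2) * (β k) ^ 2) := Finset.mul_sum _ _ _
    _ ≤ ∑ k ∈ Finset.range t,
        (α * β k - (L / 2) * (β k) ^ 2) * ‖(1 / β k) • (lam k - lam (k + 1))‖ ^ 2 := by
        refine Finset.sum_le_sum fun k hk => ?_
        rw [mul_comm]
        exact mul_le_mul_of_nonneg_left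
          (Finset.inf'_le _ hk) (hWnn k (Finset.mem_range.mp hk))
    _ ≤ Lstar + f (lam 0) + h (lam 0) := hsum
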